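/- Let G ⊆ F_K \ {0} be a set of polynomials in a function ring over a field. Then G is a right Gröbner basis (the reduction relation →_{r,G} is confluent and its reflexive-symmetric-transitive closure equals the right ideal congruence) if and only if every element g of the right ideal generated by G satisfies g →*_{r,G} 0. -/

import Mathlib

set_option linter.unusedSectionVars false
set_option linter.unusedVariables false

variable {K T : Type*} [Field K] [LinearOrder T] [Nonempty T]

/-- The head term: the largest element of the support (junk value at `0`). -/
noncomputable def HT (f : T →₀ K) : T :=
  if h : f.support.Nonempty then f.support.max' h else Classical.arbitrary T

/-- The head term as an element of `WithBot T` (`⊥` for the zero function). -/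
def HTb (f : T →₀ K) : WithBot T := f.support.max

/-- The head coefficient. -/
noncomputable def HC (f : T →₀ K) : K := f (HT f)

/-- The head monomial. -/
noncomputable def HM (f : T →₀ K) : T →₀ K := Finsupp.single (HT f) (HC f)

/-- A monomial: a function of the form `α · t` with `α ≠ 0`. -/
def IsMonomial (m : T →₀ K) : Prop :=
  ∃ (t : T) (α : K), α ≠ 0 ∧ m = Finsupp.single t α

/-- The data of a function ring over the field `K` with set of terms `T`:
an associative, distributive multiplication on `T →₀ K` compatible with
scalar multiplication. -/
structure FRMul (K T : Type*) [Field K] [LinearOrder T] where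
  mul : (T →₀ K) → (T →₀ K) → (T →₀ K)
  mul_assoc : ∀ f g h, mul (mul f g) h = mul f (mul g h)
  left_distrib : ∀ f g h, mul f (g + h) = mul f g + mul f h
  right_distrib : ∀ f g h, mul (f + g) h = mul f h + mul g h
  smul_mul : ∀ (a : K) (f g : T →₀ K), mul (a • f) g = a • mul f g
  mul_smul : ∀ (a : K) (f g : T →₀ K), mul f (a • g) = a • mul f g

/-- The right ideal generated by `F`: finite sums `∑ fᵢ * hᵢ` with `fᵢ ∈ F`. -/
def rIdeal (M : FRMul K T) (F : Set (T →₀ K)) : Set (T →₀ K) :=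
  {g | ∃ (n : ℕ) (fs hs : Fin n → (T →₀ K)),
    (∀ i, fs i ∈ F) ∧ g = ∑ i, M.mul (fs i) (hs i)}

/-- A right reductive restriction `≥` of the term ordering: a partial ordering
contained in `⪰` and compatible with right multiplication in the sense that if
`t₂ ≥ t₁`, `t₁ ≻ t` and `t₂ = HT (t₁ * w)`, then `t₂ ≻ t * w`. -/
structure RROrder (K T : Type*) [Field K] [LinearOrder T] [Nonempty T]
    (M : FRMul K T) where
  geq : T → T → Prop
  refl : ∀ t, geq t t
  trans : ∀ {a b c}, geq a b → geq b c → geq a c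
  antisymm : ∀ {a b}, geq a b → geq b a → a = b
  le_of_geq : ∀ {t s}, geq t s → s ≤ t
  compat : ∀ {t t₁ t₂ w : T}, geq t₂ t₁ → t < t₁ →
    HTb (M.mul (Finsupp.single t₁ (1 : K)) (Finsupp.single w (1 : K))) = (t₂ : WithBot T) →
    ∀ s ∈ (M.mul (Finsupp.single t (1 : K)) (Finsupp.single w (1 : K))).support, s < t₂

/-- Right reduction: `f` right reduces `p` to `q` at the monomial `p t · t` if
there is a monomial `m` with `HT (f * m) = HT (HT f * m) = t ≥ HT f` and
`HM (f * m) = p t · t`, and `q = p - f * m`. -/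
def RRed (M : FRMul K T) (O : RROrder K T M) (f p q : T →₀ K) : Prop :=
  f ≠ 0 ∧ ∃ t ∈ p.support, ∃ m : T →₀ K, IsMonomial m ∧
    HTb (M.mul f m) = (t : WithBot T) ∧
    HTb (M.mul (Finsupp.single (HT f) (1 : K)) m) = (t : WithBot T) ∧
    O.geq t (HT f) ∧
    HM (M.mul f m) = Finsupp.single t (p t) ∧
    q = p - M.mul f m

/-- Right reduction by a set of polynomials. -/
def RRedSet (M : FRMul K T) (O : RROrder K T M) (F : Set (T →₀ K)) (p q : T →₀ K) : Prop :=
  ∃ f ∈ F, RRed M O f p q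

/-- Confluence of a relation. -/
def Confluent {A : Type*} (r : A → A → Prop) : Prop :=
  ∀ a b c : A, Relation.ReflTransGen r a b → Relation.ReflTransGen r a c →
    ∃ d, Relation.ReflTransGen r b d ∧ Relation.ReflTransGen r c d

/-! ### Auxiliary lemmas -/

lemma HTb_smul {β : K} (hβ : β ≠ 0) (g : T →₀ K) : HTb (β • g) = HTb g := by
  unfold HTb; rw [Finsupp.support_smul_eq hβ]

lemma HM_smul {β : K} (hβ : β ≠ 0) (g : T →₀ K) : HM (β • g) = β • HM g := by
  unfold HM HC HT
  rw [Finsupp.support_smul_eq hβ, Finsupp.smul_single]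
  simp

lemma FRMul.mul_neg (M : FRMul K T) (f h : T →₀ K) : M.mul f (-h) = -M.mul f h := by
  have := M.mul_smul (-1 : K) f h
  simpa using this

lemma rIdeal_zero (M : FRMul K T) (F : Set (T →₀ K)) : (0 : T →₀ K) ∈ rIdeal M F :=
  ⟨0, Fin.elim0, Fin.elim0, fun i => i.elim0, by simp⟩

lemma rIdeal_mem_mul (M : FRMul K T) {F : Set (T →₀ K)} {f : T →₀ K} (hf : f ∈ F)
    (m : T →₀ K) : M.mul f m ∈ rIdeal M F :=
  ⟨1, fun _ => f, fun _ => m, fun _ => hf, by simp⟩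

lemma rIdeal_add (M : FRMul K T) {F : Set (T →₀ K)} {a b : T →₀ K}
    (ha : a ∈ rIdeal M F) (hb : b ∈ rIdeal M F) : a + b ∈ rIdeal M F := by
  obtain ⟨n, fs, hs, hfs, rfl⟩ := ha
  obtain ⟨n', fs', hs', hfs', rfl⟩ := hb
  refine ⟨n + n', Fin.addCases fs fs', Fin.addCases hs hs', ?_, ?_⟩
  · intro i
    induction i using Fin.addCases with
    | left i => simpa using hfs i
    | right i => simpa using hfs' i
  · rw [Fin.sum_univ_add]
    simp

lemma rIdeal_neg (M : FRMul K T) {F : Set (T →₀ K)} {a : T →₀ K}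
    (ha : a ∈ rIdeal M F) : -a ∈ rIdeal M F := by
  obtain ⟨n, fs, hs, hfs, rfl⟩ := ha
  refine ⟨n, fs, fun i => -(hs i), hfs, ?_⟩
  simp [M.mul_neg]

lemma rIdeal_sub (M : FRMul K T) {F : Set (T →₀ K)} {a b : T →₀ K}
    (ha : a ∈ rIdeal M F) (hb : b ∈ rIdeal M F) : a - b ∈ rIdeal M F := by
  rw [sub_eq_add_neg]; exact rIdeal_add M ha (rIdeal_neg M hb)

lemma eqvGen_sub_mem (M : FRMul K T) (O : RROrder K T M) (G : Set (T →₀ K))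
    {p q : T →₀ K} (h : Relation.EqvGen (RRedSet M O G) p q) : p - q ∈ rIdeal M G := by
  induction h with
  | rel p q hpq =>
      obtain ⟨f, hfG, -, t, -, m, -, -, -, -, -, rfl⟩ := hpq
      simpa using rIdeal_mem_mul M hfG m
  | refl p => simpa using rIdeal_zero M G
  | symm p q _ ih => simpa using rIdeal_neg M ih
  | trans p q r _ _ ih₁ ih₂ => simpa using rIdeal_add M ih₁ ih₂

lemma rtg_imp_eqvGen {A : Type*} {r : A → A → Prop} {a b : A}
    (h : Relation.ReflTransGen r a b) : Relation.EqvGen r a b := by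
  induction h with
  | refl => exact Relation.EqvGen.refl _
  | tail _ hs ih => exact Relation.EqvGen.trans _ _ _ ih (Relation.EqvGen.rel _ _ hs)

lemma rtg_from_zero (M : FRMul K T) (O : RROrder K T M) (G : Set (T →₀ K)) {x : T →₀ K}
    (h : Relation.ReflTransGen (RRedSet M O G) 0 x) : x = 0 := by
  induction h with
  | refl => rfl
  | tail _ hs ih =>
      subst ih
      obtain ⟨f, -, -, t, ht, -⟩ := hs
      simp at ht

/-- Reduce `x` (in zero or one steps) by the monomial `f * m`, rescaled so as to cancel
the coefficient of `x` at `t`. -/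
lemma reach_sub (M : FRMul K T) (O : RROrder K T M) (G : Set (T →₀ K))
    {f m : T →₀ K} {t : T} {c : K} (hfG : f ∈ G) (hf : f ≠ 0) (hm : IsMonomial m)
    (h1 : HTb (M.mul f m) = (t : WithBot T))
    (h2 : HTb (M.mul (Finsupp.single (HT f) (1 : K)) m) = (t : WithBot T))
    (h3 : O.geq t (HT f))
    (h4 : HM (M.mul f m) = Finsupp.single t c) (hc : c ≠ 0) (x : T →₀ K) :
    Relation.ReflTransGen (RRedSet M O G) x (x - (x t / c) • M.mul f m) := by
  by_cases hx : x t = 0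
  · have : x - (x t / c) • M.mul f m = x := by simp [hx]
    rw [this]
  · refine Relation.ReflTransGen.single ⟨f, hfG, hf, t, ?_, (x t / c) • m, ?_, ?_, ?_, h3, ?_, ?_⟩
    · simpa [Finsupp.mem_support_iff] using hx
    · obtain ⟨s, α, hα, rfl⟩ := hm
      exact ⟨s, (x t / c) * α, by simp [hx, hc, hα], by rw [Finsupp.smul_single]; rfl⟩
    · rw [M.mul_smul, HTb_smul (by simp [hx, hc]) _, h1]
    · rw [M.mul_smul, HTb_smul (by simp [hx, hc]) _, h2]
    · rw [M.mul_smul, HM_smul (by simp [hx, hc]) _, h4, Finsupp.smul_single]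
      congr 1
      exact div_mul_cancel₀ _ hc
    · rw [M.mul_smul]

/-- The translation lemma: if `p - q` reduces to `0`, then `p` and `q` are joinable. -/
lemma translation (M : FRMul K T) (O : RROrder K T M) (G : Set (T →₀ K))
    {w : T →₀ K} (h : Relation.ReflTransGen (RRedSet M O G) w 0) :
    ∀ p q : T →₀ K, p - q = w →
      Relation.Join (Relation.ReflTransGen (RRedSet M O G)) p q := by
  induction h using Relation.ReflTransGen.head_induction_on with
  | refl =>
      intro p q hpq
      have : p = q := by rwa [sub_eq_zero] at hpq
      exact this ▸ ⟨p, .refl, .refl⟩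
  | head hs _ ih =>
      rename_i w r _
      intro p q hpq
      subst hpq
      obtain ⟨f, hfG, hf, t, ht, m, hm, h1, h2, h3, h4, rfl⟩ := hs
      set c : K := (p - q) t with hc_def
      have hc : c ≠ 0 := by simpa [Finsupp.mem_support_iff, hc_def] using ht
      have hp := reach_sub M O G hfG hf hm h1 h2 h3 h4 hc p
      have hq := reach_sub M O G hfG hf hm h1 h2 h3 h4 hc q
      have hkey : (p - (p t / c) • M.mul f m) - (q - (q t / c) • M.mul f m)
          = p - q - M.mul f m := by
        have : p t / c - q t / c = 1 := by
          rw [div_sub_div_same, hc_def]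
          simp only [Finsupp.sub_apply]
          exact div_self hc
        have h5 : (p t / c) • M.mul f m - (q t / c) • M.mul f m = M.mul f m := by
          rw [← sub_smul, this, one_smul]
        rw [sub_sub_sub_comm, h5]
      obtain ⟨d, hd1, hd2⟩ := ih _ _ hkey
      exact ⟨d, hp.trans hd1, hq.trans hd2⟩

lemma join_imp_eqvGen {A : Type*} {r : A → A → Prop} {a b : A}
    (h : Relation.Join (Relation.ReflTransGen r) a b) : Relation.EqvGen r a b := by
  obtain ⟨d, h1, h2⟩ := h
  exact Relation.EqvGen.trans _ _ _ (rtg_imp_eqvGen h1)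
    (Relation.EqvGen.symm _ _ (rtg_imp_eqvGen h2))

lemma eqvGen_join_of_confluent {A : Type*} {r : A → A → Prop} (hc : Confluent r)
    {a b : A} (h : Relation.EqvGen r a b) :
    Relation.Join (Relation.ReflTransGen r) a b := by
  induction h with
  | rel a b hab => exact ⟨b, Relation.ReflTransGen.single hab, .refl⟩
  | refl a => exact ⟨a, .refl, .refl⟩
  | symm a b _ ih => obtain ⟨d, h1, h2⟩ := ih; exact ⟨d, h2, h1⟩
  | trans a b c _ _ ih₁ ih₂ =>
      obtain ⟨d₁, h1, h2⟩ := ih₁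
      obtain ⟨d₂, h3, h4⟩ := ih₂
      obtain ⟨e, h5, h6⟩ := hc b d₁ d₂ h2 h3
      exact ⟨e, h1.trans h5, h4.trans h6⟩

/-- A set `G` of nonzero polynomials is a right Gröbner basis (the
reflexive-symmetric-transitive closure of right reduction by `G` equals the
right ideal congruence and right reduction by `G` is confluent) if and only if
every element of the right ideal generated by `G` right reduces to `0`. -/
theorem rightGB_iff_red_to_zero
    (hwf : WellFounded ((· < ·) : T → T → Prop))
    (M : FRMul K T) (O : RROrder K T M)
    (G : Set (T →₀ K)) (hG : ∀ g ∈ G, g ≠ 0) :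
    ((∀ p q : T →₀ K, Relation.EqvGen (RRedSet M O G) p q ↔ p - q ∈ rIdeal M G) ∧
        Confluent (RRedSet M O G)) ↔
      ∀ g ∈ rIdeal M G, Relation.ReflTransGen (RRedSet M O G) g 0 := by
  constructor
  · rintro ⟨hiff, hconf⟩ g hg
    have he : Relation.EqvGen (RRedSet M O G) g 0 := (hiff g 0).mpr (by simpa using hg)
    obtain ⟨d, hd1, hd2⟩ := eqvGen_join_of_confluent hconf he
    rwa [rtg_from_zero M O G hd2] at hd1
  · intro H
    constructor
    · intro p q
      constructor
      · exact eqvGen_sub_mem M O G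
      · intro hpq
        exact join_imp_eqvGen (translation M O G (H _ hpq) p q rfl)
    · intro a b c hab hac
      have h1 : a - b ∈ rIdeal M G := eqvGen_sub_mem M O G (rtg_imp_eqvGen hab)
      have h2 : a - c ∈ rIdeal M G := eqvGen_sub_mem M O G (rtg_imp_eqvGen hac)
      have h3 : b - c ∈ rIdeal M G := by
        have := rIdeal_sub M h2 h1
        simpa [sub_sub_sub_cancel_left] using this
      exact translation M O G (H _ h3) b c rfl
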